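/- Let c = (c_j)_{j ∈ ℕ} be a nonnegative sequence with Σ_j c_j < 1. Then the family (|s|!/s! · c^s)_{s ∈ F} is summable, with sum Σ_{s ∈ F} (|s|!/s!) c^s = 1/(1 - Σ_j c_j). -/

import Mathlib

/-- `|s|!/s!` for a finitely supported multi-index `s`. -/
noncomputable def mcoef (s : ℕ →₀ ℕ) : ℝ :=
  (Nat.factorial (s.sum fun _ n => n) : ℝ) / ∏ j ∈ s.support, (Nat.factorial (s j) : ℝ)

/-- `c^s = ∏_j c_j^{s_j}`. -/
noncomputable def fpow (c : ℕ → ℝ) (s : ℕ →₀ ℕ) : ℝ :=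
  ∏ j ∈ s.support, c j ^ s j


open Finset
open scoped ENNReal NNReal

lemma mcoef_eq (s : ℕ →₀ ℕ) : mcoef s = (Nat.multinomial s.support ⇑s : ℝ) := by
  rw [mcoef, div_eq_iff]
  · rw [← Nat.cast_prod, ← Nat.cast_mul, mul_comm, Nat.multinomial_spec]
    rfl
  · rw [← Nat.cast_prod]
    exact_mod_cast (Finset.prod_pos fun i _ => Nat.factorial_pos _).ne'

lemma multinomial_subset (f : ℕ →₀ ℕ) (T : Finset ℕ) (h : f.support ⊆ T) :
    Nat.multinomial T ⇑f = Nat.multinomial f.support ⇑f := by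
  unfold Nat.multinomial
  rw [Finset.sum_subset h (fun x _ hx => Finsupp.notMem_support_iff.mp hx),
    Finset.prod_subset h (fun x _ hx => by
      rw [Finsupp.notMem_support_iff.mp hx]; simp)]

noncomputable def aa (c : ℕ → ℝ) (s : ℕ →₀ ℕ) : ℝ≥0∞ :=
  ENNReal.ofReal (mcoef s * fpow c s)

lemma aa_eq (c : ℕ → ℝ) (hc : ∀ j, 0 ≤ c j) (s : ℕ →₀ ℕ) :
    aa c s = (Nat.multinomial s.support ⇑s : ℝ≥0∞) *
      ∏ j ∈ s.support, (ENNReal.ofReal (c j)) ^ s j := by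
  rw [aa, ENNReal.ofReal_mul (by rw [mcoef_eq]; positivity), mcoef_eq, fpow,
    ENNReal.ofReal_natCast, ENNReal.ofReal_prod_of_nonneg (fun i _ => pow_nonneg (hc i) _)]
  congr 1
  exact Finset.prod_congr rfl fun i _ => ENNReal.ofReal_pow (hc i) _

lemma fin_sum (c : ℕ → ℝ) (hc : ∀ j, 0 ≤ c j) (m n : ℕ) :
    (∑ j ∈ range m, ENNReal.ofReal (c j)) ^ n
      = ∑ s ∈ finsuppAntidiag (range m) n, aa c s := by
  rw [Finset.sum_pow_eq_sum_piAntidiag]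
  refine Finset.sum_bij' (fun k hk => Finsupp.onFinset (range m) k
      (fun a ha => (Finset.mem_piAntidiag.mp hk).2 a ha))
    (fun s _ => ⇑s) ?_ ?_ ?_ ?_ ?_
  · intro k hk
    obtain ⟨h1, h2⟩ := Finset.mem_piAntidiag.mp hk
    rw [Finset.mem_finsuppAntidiag]
    constructor
    · simpa using h1
    · exact Finsupp.support_onFinset_subset
  · intro s hhs
    obtain ⟨h1, h2⟩ := Finset.mem_finsuppAntidiag.mp hhs
    rw [Finset.mem_piAntidiag]
    exact ⟨h1, fun i hi => h2 (Finsupp.mem_support_iff.mpr hi)⟩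
  · intro k hk; rfl
  · intro s hhs
    ext j; simp
  · intro k hk
    obtain ⟨h1, h2⟩ := Finset.mem_piAntidiag.mp hk
    rw [aa_eq c hc]
    have hsupp : (Finsupp.onFinset (range m) k
        (fun a ha => h2 a ha)).support ⊆ range m := Finsupp.support_onFinset_subset
    rw [← multinomial_subset _ _ hsupp]
    simp only [Finsupp.onFinset_apply]
    congr 1
    refine (Finset.prod_subset hsupp fun x _ hx => ?_).symm
    have hx0 : k x = 0 := by simpa using Finsupp.notMem_support_iff.mp hx
    rw [hx0, pow_zero]

lemma deg_eq_sum_range {s : ℕ →₀ ℕ} {m : ℕ} (h : s.support ⊆ range m) :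
    ∑ j ∈ range m, s j = s.sum fun _ k => k :=
  (Finset.sum_subset h fun x _ hx => Finsupp.notMem_support_iff.mp hx).symm

lemma level (c : ℕ → ℝ) (hc : ∀ j, 0 ≤ c j) (n : ℕ) :
    ∑' x : {s : ℕ →₀ ℕ // (s.sum fun _ k => k) = n}, aa c x.1
      = (∑' j, ENNReal.ofReal (c j)) ^ n := by
  set t := ∑' j, ENNReal.ofReal (c j) with ht
  have hF : ∀ T : Finset {s : ℕ →₀ ℕ // (s.sum fun _ k => k) = n},
      ∃ m, T ⊆ (finsuppAntidiag (range m) n).subtype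
        (fun s => (s.sum fun _ k => k) = n) := by
    intro T
    refine ⟨(T.sup fun x => x.1.support.sup id) + 1, fun x hx => ?_⟩
    rw [Finset.mem_subtype, Finset.mem_finsuppAntidiag]
    have hsupp : x.1.support ⊆ range ((T.sup fun x => x.1.support.sup id) + 1) := by
      intro j hj
      rw [Finset.mem_range, Nat.lt_succ_iff]
      exact le_trans (Finset.le_sup (f := id) hj)
        (Finset.le_sup (f := fun x => x.1.support.sup id) hx)
    exact ⟨by rw [deg_eq_sum_range hsupp]; exact x.2, hsupp⟩
  rw [ENNReal.tsum_eq_iSup_sum' _ hF]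
  have hsum : ∀ m, (∑ x ∈ (finsuppAntidiag (range m) n).subtype
        (fun s => (s.sum fun _ k => k) = n), aa c x.1)
      = (∑ j ∈ range m, ENNReal.ofReal (c j)) ^ n := by
    intro m
    rw [Finset.sum_subtype_eq_sum_filter, fin_sum c hc]
    congr 1
    refine Finset.filter_true_of_mem fun s hs => ?_
    obtain ⟨h1, h2⟩ := Finset.mem_finsuppAntidiag.mp hs
    rw [← deg_eq_sum_range h2]; exact h1
  simp only [hsum]
  have hmono : Monotone fun m => (∑ j ∈ range m, ENNReal.ofReal (c j)) ^ n :=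
    fun i j hij => pow_le_pow_left₀ zero_le
      (Finset.sum_le_sum_of_subset (Finset.range_subset_range.mpr hij)) n
  exact tendsto_nhds_unique (tendsto_atTop_iSup hmono)
    (ENNReal.Tendsto.pow (ENNReal.tendsto_nat_tsum _))

lemma total (c : ℕ → ℝ) (hc : ∀ j, 0 ≤ c j) :
    ∑' s : ℕ →₀ ℕ, aa c s = (1 - ∑' j, ENNReal.ofReal (c j))⁻¹ := by
  rw [← (Equiv.sigmaFiberEquiv (fun s : ℕ →₀ ℕ => s.sum fun _ k => k)).tsum_eq (aa c),
    ENNReal.tsum_sigma']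
  simp only [Equiv.sigmaFiberEquiv]
  calc (∑' (n : ℕ) (x : {s : ℕ →₀ ℕ // (s.sum fun _ k => k) = n}), aa c x.1)
      = ∑' n : ℕ, (∑' j, ENNReal.ofReal (c j)) ^ n := by
        exact tsum_congr fun n => level c hc n
    _ = (1 - ∑' j, ENNReal.ofReal (c j))⁻¹ := ENNReal.tsum_geometric _

lemma nonneg_term (c : ℕ → ℝ) (hc : ∀ j, 0 ≤ c j) (s : ℕ →₀ ℕ) :
    0 ≤ mcoef s * fpow c s := by
  apply mul_nonneg
  · rw [mcoef_eq]; positivity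
  · exact Finset.prod_nonneg fun j _ => pow_nonneg (hc j) _

/-- if `Σ_j c_j < 1` then `Σ_{s ∈ F} (|s|!/s!) c^s = 1/(1 - Σ_j c_j)`. -/
theorem stmt4 (c : ℕ → ℝ) (hc : ∀ j, 0 ≤ c j) (hs : Summable c)
    (h1 : (∑' j, c j) < 1) :
    Summable (fun s : ℕ →₀ ℕ => mcoef s * fpow c s) ∧
      (∑' s : ℕ →₀ ℕ, mcoef s * fpow c s) = (1 - ∑' j, c j)⁻¹ := by
  set T := ∑' j, c j with hT
  have hT0 : 0 ≤ T := tsum_nonneg hc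
  have ht : (∑' j, ENNReal.ofReal (c j)) = ENNReal.ofReal T :=
    (ENNReal.ofReal_tsum_of_nonneg hc hs).symm
  have htot : ∑' s : ℕ →₀ ℕ, aa c s = (1 - ENNReal.ofReal T)⁻¹ := by
    rw [total c hc, ht]
  have hlt : ENNReal.ofReal T < 1 := by
    rw [← ENNReal.ofReal_one]
    exact ENNReal.ofReal_lt_ofReal_iff_of_nonneg hT0 |>.mpr h1
  have hsub : (1 : ℝ≥0∞) - ENNReal.ofReal T = ENNReal.ofReal (1 - T) := by
    rw [ENNReal.ofReal_sub _ hT0, ENNReal.ofReal_one]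
  have hne : (1 : ℝ≥0∞) - ENNReal.ofReal T ≠ 0 := by
    intro h
    exact absurd (tsub_eq_zero_iff_le.mp h) (not_le.mpr hlt)
  have hfin : (∑' s : ℕ →₀ ℕ, aa c s) ≠ ⊤ := by
    rw [htot]
    exact ENNReal.inv_ne_top.mpr hne
  have hto : ∀ s : ℕ →₀ ℕ, (aa c s).toReal = mcoef s * fpow c s := fun s =>
    ENNReal.toReal_ofReal (nonneg_term c hc s)
  have hsummable : Summable (fun s : ℕ →₀ ℕ => mcoef s * fpow c s) := by
    have := ENNReal.summable_toReal hfin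
    simpa only [hto] using this
  refine ⟨hsummable, ?_⟩
  have := ENNReal.tsum_toReal_eq (f := aa c) fun s => ENNReal.ofReal_ne_top
  rw [htot] at this
  calc (∑' s : ℕ →₀ ℕ, mcoef s * fpow c s)
      = ((1 - ENNReal.ofReal T)⁻¹).toReal := by
        rw [this]; exact tsum_congr fun s => (hto s).symm
    _ = (1 - T)⁻¹ := by
        rw [hsub, ENNReal.toReal_inv, ENNReal.toReal_ofReal (by linarith)]
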